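/- arXiv:2605.26985 — 2 statements merged into one kernel-verified Lean document; each statement's English description precedes it below -/
import Mathlib

section
/- Let f: ℝ^d → ℝ be convex, differentiable, and L_f-smooth, and let x⋆ = z⋆. Suppose z^{k+1} solves z^{k+1} = z^k - η_z (z^{k+1} - (2x^{k+1} - x^k)) for η_z > 0. Then for any a_z > 0 and any η_x > 0: (1/η_z) D_f(z^{k+1}; z⋆) ≤ (1/η_z) D_f(z^k; z⋆) - D_f(z^{k+1}; z⋆) + ⟨∇f(z^{k+1}) - ∇f(z⋆), x^{k+1} - x⋆⟩ - ((1 - a_z)/η_z) D_f(z^k; z^{k+1}) - D_f(z⋆; z^{k+1}) + ⟨∇f(z^k) - ∇f(z⋆), x^{k+1} - x^k⟩ + (L_f η_x η_z)·(1/(2 a_z η_x))‖x^{k+1} - x^k‖². -/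
open RealInnerProductSpace

abbrev Euc (d : ℕ) := EuclideanSpace ℝ (Fin d)

/-- Bregman divergence `D_f(u; v) = f(u) - f(v) - ⟨∇f(v), u - v⟩`. -/
noncomputable def breg {d : ℕ} (f : Euc d → ℝ) (f' : Euc d → Euc d)
    (u v : Euc d) : ℝ :=
  f u - f v - ⟪f' v, u - v⟫

variable {d : ℕ} {f : Euc d → ℝ} {f' : Euc d → Euc d}

lemma line_hasDerivAt (hfdiff : ∀ x, HasGradientAt f (f' x) x) (u v : Euc d) (t : ℝ) :
    HasDerivAt (fun s : ℝ => f (v + s • (u - v))) ⟪f' (v + t • (u - v)), u - v⟫ t := by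
  have hline : HasDerivAt (fun s : ℝ => v + s • (u - v)) (u - v) t := by
    simpa using ((hasDerivAt_id t).smul_const (u - v)).const_add v
  have hf := (hfdiff (v + t • (u - v))).hasFDerivAt
  have := hf.comp_hasDerivAt t hline
  simpa [InnerProductSpace.toDual_apply_apply, Function.comp_def] using this

lemma breg_nonneg (hfconv : ConvexOn ℝ Set.univ f)
    (hfdiff : ∀ x, HasGradientAt f (f' x) x) (u v : Euc d) :
    0 ≤ breg f f' u v := by
  have hconv : ConvexOn ℝ Set.univ (fun s : ℝ => f (v + s • (u - v))) := by
    have h := hfconv.comp_affineMap (AffineMap.lineMap v u)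
    have he : (fun s : ℝ => f (v + s • (u - v))) = f ∘ (AffineMap.lineMap v u) := by
      funext s
      simp [AffineMap.lineMap_apply, Function.comp]
      congr 1
      module
    rw [he]
    simpa using h
  have hd := line_hasDerivAt hfdiff u v 0
  have hslope := hconv.le_slope_of_hasDerivAt (Set.mem_univ 0) (Set.mem_univ 1)
    one_pos hd
  rw [slope_def_field] at hslope
  have h0 : v + (0:ℝ) • (u - v) = v := by simp
  have h1 : v + (1:ℝ) • (u - v) = u := by module
  rw [h0, h1] at hslope
  norm_num at hslope
  simp only [breg]
  have hi : (inner ℝ (f' v) (u - v) : ℝ) = ∑ x, f' v x * (u x - v x) := by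
    simp [PiLp.inner_apply, mul_comm]
  linarith [hslope, hi.le, hi.ge]

lemma descent_lemma {Lf : ℝ} (hL : 0 < Lf)
    (hfdiff : ∀ x, HasGradientAt f (f' x) x)
    (hflip : ∀ x y, ‖f' x - f' y‖ ≤ Lf * ‖x - y‖) (u v : Euc d) :
    f u ≤ f v + ⟪f' v, u - v⟫ + Lf / 2 * ‖u - v‖ ^ 2 := by
  set g' : ℝ → ℝ := fun t => ⟪f' (v + t • (u - v)), u - v⟫ with hg'
  have hcontf' : Continuous f' := by
    have hlip : LipschitzWith (Real.toNNReal Lf) f' := by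
      apply LipschitzWith.of_dist_le_mul
      intro a b
      rw [dist_eq_norm, dist_eq_norm, Real.coe_toNNReal _ hL.le]
      exact hflip a b
    exact hlip.continuous
  have hcont : Continuous g' := by
    apply Continuous.inner
    · exact hcontf'.comp (by continuity)
    · exact continuous_const
  have hint : f (v + (1:ℝ) • (u - v)) - f (v + (0:ℝ) • (u - v)) = ∫ t in (0:ℝ)..1, g' t :=
    (intervalIntegral.integral_eq_sub_of_hasDerivAt
      (fun t _ => line_hasDerivAt hfdiff u v t) (hcont.intervalIntegrable 0 1)).symm
  set C : ℝ := Lf * ‖u - v‖ ^ 2 with hC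
  have hmono : ∫ t in (0:ℝ)..1, g' t ≤ ∫ t in (0:ℝ)..1, (g' 0 + t * C) := by
    apply intervalIntegral.integral_mono_on (by norm_num)
      (hcont.intervalIntegrable 0 1)
      ((continuous_const.add (continuous_id.mul continuous_const)).intervalIntegrable 0 1)
    intro t ht
    have h0 : v + (0:ℝ) • (u - v) = v := by simp
    have hd : g' t - g' 0 = ⟪f' (v + t • (u - v)) - f' v, u - v⟫ := by
      rw [hg']
      simp only [h0]
      rw [inner_sub_left]
    have hb : ⟪f' (v + t • (u - v)) - f' v, u - v⟫ ≤ ‖f' (v + t • (u - v)) - f' v‖ * ‖u - v‖ :=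
      real_inner_le_norm _ _
    have hlipb : ‖f' (v + t • (u - v)) - f' v‖ ≤ Lf * (t * ‖u - v‖) := by
      have := hflip (v + t • (u - v)) v
      have he : v + t • (u - v) - v = t • (u - v) := by module
      rw [he, norm_smul] at this
      simpa [abs_of_nonneg ht.1] using this
    show g' t ≤ g' 0 + t * C
    nlinarith [norm_nonneg (u - v), ht.1, hb, hlipb, hd, hC,
      mul_le_mul_of_nonneg_right hlipb (norm_nonneg (u - v)), sq_abs (‖u - v‖)]
  have hval : ∫ t in (0:ℝ)..1, (g' 0 + t * C) = g' 0 + C / 2 := by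
    rw [intervalIntegral.integral_add (intervalIntegrable_const)
      ((intervalIntegral.intervalIntegrable_id).mul_const C)]
    rw [intervalIntegral.integral_mul_const, integral_id, intervalIntegral.integral_const]
    norm_num
    ring
  have h0 : v + (0:ℝ) • (u - v) = v := by simp
  have h1 : v + (1:ℝ) • (u - v) = u := by module
  rw [h0, h1] at hint
  have hg0 : g' 0 = ⟪f' v, u - v⟫ := by rw [hg']; simp only [h0]
  linarith [hint, hmono, hval.le, hval.ge, hg0.le, hg0.ge, hC.le, hC.ge]

lemma coco {Lf : ℝ} (hL : 0 < Lf)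
    (hfconv : ConvexOn ℝ Set.univ f)
    (hfdiff : ∀ x, HasGradientAt f (f' x) x)
    (hflip : ∀ x y, ‖f' x - f' y‖ ≤ Lf * ‖x - y‖) (u v : Euc d) :
    ‖f' u - f' v‖ ^ 2 ≤ 2 * Lf * breg f f' u v := by
  set G : Euc d := f' u - f' v with hG
  set w : Euc d := u - (1 / Lf) • G with hw
  have h1 : 0 ≤ f w - f v - ⟪f' v, w - v⟫ := breg_nonneg hfconv hfdiff w v
  have h2 : f w ≤ f u + ⟪f' u, w - u⟫ + Lf / 2 * ‖w - u‖ ^ 2 :=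
    descent_lemma hL hfdiff hflip w u
  have hwu : w - u = (-(1 / Lf)) • G := by rw [hw]; module
  have hwv : w - v = (u - v) + (-(1 / Lf)) • G := by rw [hw]; module
  have e1 : ⟪f' u, w - u⟫ = -(1 / Lf) * ⟪f' u, G⟫ := by
    rw [hwu, real_inner_smul_right]
  have e2 : ⟪f' v, w - v⟫ = ⟪f' v, u - v⟫ + (-(1 / Lf)) * ⟪f' v, G⟫ := by
    rw [hwv, inner_add_right, real_inner_smul_right]
  have e3 : ‖w - u‖ ^ 2 = (1 / Lf) ^ 2 * ‖G‖ ^ 2 := by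
    rw [hwu, norm_smul]
    rw [Real.norm_eq_abs]
    rw [mul_pow, sq_abs]
    ring
  have e4 : ⟪f' u, G⟫ - ⟪f' v, G⟫ = ‖G‖ ^ 2 := by
    rw [← inner_sub_left, ← hG, real_inner_self_eq_norm_sq]
  have hbreg : breg f f' u v = f u - f v - ⟪f' v, u - v⟫ := rfl
  rw [hbreg]
  have hLne : Lf ≠ 0 := ne_of_gt hL
  rw [e1, e3] at h2
  rw [e2] at h1
  -- combine
  have : (1 / Lf) * ‖G‖ ^ 2 - Lf / 2 * ((1 / Lf) ^ 2 * ‖G‖ ^ 2)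
      ≤ f u - f v - ⟪f' v, u - v⟫ := by
    have e4' : (1 / Lf) * ⟪f' u, G⟫ - (1 / Lf) * ⟪f' v, G⟫ = (1 / Lf) * ‖G‖ ^ 2 := by
      linear_combination (1 / Lf) * e4
    linarith [h1, h2, e4']
  have hid : (1 / Lf) * ‖G‖ ^ 2 - Lf / 2 * ((1 / Lf) ^ 2 * ‖G‖ ^ 2) = ‖G‖ ^ 2 / (2 * Lf) := by
    field_simp
    ring
  rw [hid] at this
  rw [div_le_iff₀ (by positivity)] at this
  nlinarith [this]

/-- Descent lemma for the dual (z) update of APGD. -/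
theorem apgd_dual_descent {d : ℕ} (Lf ηx ηz az : ℝ)
    (hL : 0 < Lf) (hηx : 0 < ηx) (hηz : 0 < ηz) (haz : 0 < az)
    (f : Euc d → ℝ) (f' : Euc d → Euc d)
    (hfconv : ConvexOn ℝ Set.univ f)
    (hfdiff : ∀ x, HasGradientAt f (f' x) x)
    (hflip : ∀ x y, ‖f' x - f' y‖ ≤ Lf * ‖x - y‖)
    (xs zs : Euc d) (hzx : xs = zs)
    (xk xk1 zk zk1 : Euc d)
    (hz : zk1 = zk - ηz • (zk1 - ((2 : ℝ) • xk1 - xk))) :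
    (1 / ηz) * breg f f' zk1 zs
      ≤ (1 / ηz) * breg f f' zk zs - breg f f' zk1 zs
        + ⟪f' zk1 - f' zs, xk1 - xs⟫
        - ((1 - az) / ηz) * breg f f' zk zk1
        - breg f f' zs zk1
        + ⟪f' zk - f' zs, xk1 - xk⟫
        + (Lf * ηx * ηz) * (1 / (2 * az * ηx)) * ‖xk1 - xk‖ ^ 2 := by
  subst hzx
  -- vector identity from the implicit update
  have hv : zk1 - zk = ηz • ((xk1 - xk) + (xk1 - zk1)) := by
    conv_lhs => rw [hz]
    module
  have hs1 : ⟪f' zk1 - f' xs, zk1 - zk⟫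
      = ηz * (⟪f' zk1 - f' xs, xk1 - xk⟫ + ⟪f' zk1 - f' xs, xk1 - zk1⟫) := by
    rw [hv, real_inner_smul_right, inner_add_right]
  -- key Young + cocoercivity inequality
  have hcoco := coco hL hfconv hfdiff hflip zk zk1
  have hb : ⟪f' zk1 - f' zk, xk1 - xk⟫ ≤ ‖f' zk - f' zk1‖ * ‖xk1 - xk‖ := by
    have h := real_inner_le_norm (f' zk1 - f' zk) (xk1 - xk)
    rw [norm_sub_rev] at h
    exact h
  have h1 : ‖f' zk - f' zk1‖ * ‖xk1 - xk‖
      ≤ az / (2 * Lf * ηz) * ‖f' zk - f' zk1‖ ^ 2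
        + Lf * ηz / (2 * az) * ‖xk1 - xk‖ ^ 2 := by
    rw [← sub_nonneg]
    have he : az / (2 * Lf * ηz) * ‖f' zk - f' zk1‖ ^ 2
        + Lf * ηz / (2 * az) * ‖xk1 - xk‖ ^ 2
        - ‖f' zk - f' zk1‖ * ‖xk1 - xk‖
        = (1 / (2 * Lf * ηz * az)) * (az * ‖f' zk - f' zk1‖ - Lf * ηz * ‖xk1 - xk‖) ^ 2 := by
      field_simp
      ring
    rw [he]
    positivity
  have h2 : az / (2 * Lf * ηz) * ‖f' zk - f' zk1‖ ^ 2 ≤ (az / ηz) * breg f f' zk zk1 := by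
    have h3 := mul_le_mul_of_nonneg_left hcoco (by positivity : (0:ℝ) ≤ az / (2 * Lf * ηz))
    have he2 : az / (2 * Lf * ηz) * (2 * Lf * breg f f' zk zk1) = (az / ηz) * breg f f' zk zk1 := by
      field_simp
    linarith [h3, he2.le, he2.ge]
  have key1 : ⟪f' zk1 - f' zk, xk1 - xk⟫
      ≤ (az / ηz) * breg f f' zk zk1 + Lf * ηz / (2 * az) * ‖xk1 - xk‖ ^ 2 := by
    linarith [hb, h1, h2]
  -- the exact three-point style identity (multiplied through by ηz)
  have Hid2 : breg f f' zk1 xs + ηz * breg f f' zk1 xs + ηz * breg f f' xs zk1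
      + (1 - az) * breg f f' zk zk1 + az * breg f f' zk zk1
      = breg f f' zk xs + ηz * ⟪f' zk1 - f' xs, xk1 - xs⟫
        + ηz * ⟪f' zk - f' xs, xk1 - xk⟫ + ηz * ⟪f' zk1 - f' zk, xk1 - xk⟫ := by
    simp only [breg, inner_sub_left, inner_sub_right] at hs1 ⊢
    linear_combination hs1
  have key1m := mul_le_mul_of_nonneg_left key1 hηz.le
  have eK : ηz * (az / ηz * breg f f' zk zk1) = az * breg f f' zk zk1 := by
    field_simp
  have hSexp : (Lf * ηx * ηz) * (1 / (2 * az * ηx)) * ‖xk1 - xk‖ ^ 2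
      = Lf * ηz / (2 * az) * ‖xk1 - xk‖ ^ 2 := by
    field_simp
  have hSexp' : ηz * ((Lf * ηx * ηz) * (1 / (2 * az * ηx)) * ‖xk1 - xk‖ ^ 2)
      = ηz * (Lf * ηz / (2 * az) * ‖xk1 - xk‖ ^ 2) := by rw [hSexp]
  apply le_of_mul_le_mul_left _ hηz
  have eA : ∀ r : ℝ, ηz * (1 / ηz * r) = r := fun r => by
    rw [← mul_assoc, mul_one_div_cancel (ne_of_gt hηz), one_mul]
  have eC : ηz * ((1 - az) / ηz * breg f f' zk zk1) = (1 - az) * breg f f' zk zk1 := by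
    field_simp
  linarith [Hid2, key1m, eK, eC, hSexp'.le, hSexp'.ge,
    eA (breg f f' zk1 xs), eA (breg f f' zk xs)]
end

section
/- Let θ = max{1/(1 + μ_g η_x), 1/(1 + μ_{h*} η_y), 2/(2 + η_z)} with μ_g, μ_{h*} > 0, and let parameters η_x = min{1/√(L_f μ_g), √(μ_{h*}/(‖K‖² μ_g))}, η_y = (1/2)√(μ_g/(‖K‖² μ_{h*})), η_z = (1/2)√(μ_g/L_f), where L_f > 0 and ‖K‖ > 0. Then ‖K‖² η_x η_y + L_f η_x η_z ≤ 1, and 1/(1 - θ) ≤ C·(1 + √(L_f/μ_g) + ‖K‖/√(μ_g μ_{h*})) for some absolute constant C; consequently θ^k ≤ ε whenever k ≥ C·(1 + √(L_f/μ_g) + ‖K‖/√(μ_g μ_{h*}))·log(1/ε) for ε ∈ (0,1). -/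
private lemma aux_one_div {a M : ℝ} (ha : 0 < a) (hM : 1 + 1/a ≤ M) :
    1/(1+a) ≤ 1 - 1/M := by
  have hM0 : 0 < M := lt_of_lt_of_le (by positivity) hM
  have h1 : 1/M ≤ 1/(1+1/a) := one_div_le_one_div_of_le (by positivity) hM
  have h2 : 1/(1+1/a) = a/(1+a) := by
    field_simp
    ring
  have h3 : 1 - 1/(1+a) = a/(1+a) := by
    field_simp
    ring
  linarith [h2 ▸ h1]

/-- Iteration complexity computation for the accelerated primal--dual methods
in the smooth regime: with the stated parameter choices, the stepsize
condition holds and `1/(1-θ)` is bounded by an absolute constant times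
`1 + √(L_f/μ_g) + ‖K‖/√(μ_g μ_{h*})`, yielding complexity
`O((√(L_f/μ_g) + ‖K‖/√(μ_g μ_{h*})) log(1/ε))`. -/
theorem smooth_regime_complexity :
    ∃ C : ℝ, 0 < C ∧
      ∀ Lf μg μh Kn : ℝ, 0 < Lf → 0 < μg → 0 < μh → 0 < Kn →
        ∀ ηx ηy ηz θ : ℝ,
          ηx = min (1 / Real.sqrt (Lf * μg)) (Real.sqrt (μh / (Kn ^ 2 * μg))) →
          ηy = (1 / 2) * Real.sqrt (μg / (Kn ^ 2 * μh)) →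
          ηz = (1 / 2) * Real.sqrt (μg / Lf) →
          θ = max (max (1 / (1 + μg * ηx)) (1 / (1 + μh * ηy))) (2 / (2 + ηz)) →
          Kn ^ 2 * ηx * ηy + Lf * ηx * ηz ≤ 1 ∧
          1 / (1 - θ)
            ≤ C * (1 + Real.sqrt (Lf / μg) + Kn / Real.sqrt (μg * μh)) ∧
          ∀ ε : ℝ, 0 < ε → ε < 1 →
            ∀ k : ℕ,
              C * (1 + Real.sqrt (Lf / μg) + Kn / Real.sqrt (μg * μh))
                  * Real.log (1 / ε) ≤ k →
              θ ^ k ≤ ε := by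
  refine ⟨4, by norm_num, ?_⟩
  intro Lf μg μh Kn hLf hμg hμh hKn ηx ηy ηz θ hηx hηy hηz hθ
  obtain ⟨x, hx⟩ : ∃ x, Real.sqrt Lf = x := ⟨_, rfl⟩
  obtain ⟨y, hy⟩ : ∃ y, Real.sqrt μg = y := ⟨_, rfl⟩
  obtain ⟨z, hz⟩ : ∃ z, Real.sqrt μh = z := ⟨_, rfl⟩
  have hx0 : 0 < x := hx ▸ Real.sqrt_pos.mpr hLf
  have hy0 : 0 < y := hy ▸ Real.sqrt_pos.mpr hμg
  have hz0 : 0 < z := hz ▸ Real.sqrt_pos.mpr hμh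
  have hx2 : x ^ 2 = Lf := by rw [← hx]; exact Real.sq_sqrt hLf.le
  have hy2 : y ^ 2 = μg := by rw [← hy]; exact Real.sq_sqrt hμg.le
  have hz2 : z ^ 2 = μh := by rw [← hz]; exact Real.sq_sqrt hμh.le
  have hKsq : Real.sqrt (Kn ^ 2) = Kn := Real.sqrt_sq hKn.le
  -- sqrt identities
  have e1 : Real.sqrt (Lf * μg) = x * y := by rw [Real.sqrt_mul hLf.le, hx, hy]
  have e2 : Real.sqrt (μh / (Kn ^ 2 * μg)) = z / (Kn * y) := by
    rw [Real.sqrt_div hμh.le, Real.sqrt_mul (sq_nonneg Kn), hKsq, hz, hy]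
  have e3 : Real.sqrt (μg / (Kn ^ 2 * μh)) = y / (Kn * z) := by
    rw [Real.sqrt_div hμg.le, Real.sqrt_mul (sq_nonneg Kn), hKsq, hy, hz]
  have e4 : Real.sqrt (μg / Lf) = y / x := by rw [Real.sqrt_div hμg.le, hx, hy]
  have e5 : Real.sqrt (Lf / μg) = x / y := by rw [Real.sqrt_div hLf.le, hx, hy]
  have e6 : Real.sqrt (μg * μh) = y * z := by rw [Real.sqrt_mul hμg.le, hy, hz]
  rw [e1, e2] at hηx
  rw [e3] at hηy
  rw [e4] at hηz
  have hηx0 : 0 < ηx := by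
    rw [hηx]; exact lt_min (by positivity) (by positivity)
  have hηy0 : 0 < ηy := by rw [hηy]; positivity
  have hηz0 : 0 < ηz := by rw [hηz]; positivity
  -- Part 1 : step size condition
  have part1 : Kn ^ 2 * ηx * ηy + Lf * ηx * ηz ≤ 1 := by
    have h1 : Kn ^ 2 * ηx * ηy ≤ 1/2 := by
      have hxle : ηx ≤ z / (Kn * y) := by rw [hηx]; exact min_le_right _ _
      calc Kn ^ 2 * ηx * ηy ≤ Kn ^ 2 * (z / (Kn * y)) * ((1/2) * (y / (Kn * z))) := by
            rw [hηy]
            apply mul_le_mul_of_nonneg_right _ (by positivity)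
            exact mul_le_mul_of_nonneg_left hxle (by positivity)
        _ = 1/2 := by field_simp
    have h2 : Lf * ηx * ηz ≤ 1/2 := by
      have hxle : ηx ≤ 1 / (x * y) := by rw [hηx]; exact min_le_left _ _
      calc Lf * ηx * ηz ≤ Lf * (1 / (x * y)) * ((1/2) * (y / x)) := by
            rw [hηz]
            apply mul_le_mul_of_nonneg_right _ (by positivity)
            exact mul_le_mul_of_nonneg_left hxle hLf.le
        _ = 1/2 := by rw [← hx2]; field_simp
    linarith
  refine ⟨part1, ?_⟩
  -- abbreviations (as plain hypotheses, no `set` folding issues)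
  have hS0 : 0 < x / y := by positivity
  have hT0 : 0 < Kn / (y * z) := by positivity
  have hE0 : (0:ℝ) < 1 + x / y + Kn / (y * z) := by positivity
  have hE1 : (1:ℝ) ≤ 1 + x / y + Kn / (y * z) := by linarith
  -- bound each term of θ by 1 - 1/(4E)
  have hb1 : 1 / (1 + μg * ηx) ≤ 1 - 1 / (4 * (1 + x / y + Kn / (y * z))) := by
    apply aux_one_div (by positivity)
    have hrecx : 1 / (μg * ηx) ≤ x / y + Kn / (y * z) := by
      rcases le_total (1 / (x * y)) (z / (Kn * y)) with h | h
      · have hmin : ηx = 1 / (x * y) := by rw [hηx, min_eq_left h]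
        have : 1 / (μg * ηx) = x / y := by
          rw [hmin, ← hy2]; field_simp
        rw [this]; linarith
      · have hmin : ηx = z / (Kn * y) := by rw [hηx, min_eq_right h]
        have : 1 / (μg * ηx) = Kn / (y * z) := by
          rw [hmin, ← hy2]; field_simp
        rw [this]; linarith
    linarith
  have hb2 : 1 / (1 + μh * ηy) ≤ 1 - 1 / (4 * (1 + x / y + Kn / (y * z))) := by
    apply aux_one_div (by positivity)
    have hrecy : 1 / (μh * ηy) = 2 * (Kn / (y * z)) := by
      rw [hηy, ← hz2]; field_simp
    rw [hrecy]; linarith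
  have hb3 : 2 / (2 + ηz) ≤ 1 - 1 / (4 * (1 + x / y + Kn / (y * z))) := by
    have heq : 2 / (2 + ηz) = 1 / (1 + ηz / 2) := by
      rw [div_eq_div_iff (by positivity) (by positivity)]; ring
    rw [heq]
    apply aux_one_div (by positivity)
    have : 1 / (ηz / 2) = 4 * (x / y) := by
      rw [hηz]; field_simp; ring
    rw [this]; linarith
  have hθle : θ ≤ 1 - 1 / (4 * (1 + x / y + Kn / (y * z))) := by
    rw [hθ]
    exact max_le (max_le hb1 hb2) hb3
  have hθ0 : 0 ≤ θ := by
    rw [hθ]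
    exact le_trans (by positivity) (le_max_right _ _)
  have h4E : (0:ℝ) < 4 * (1 + x / y + Kn / (y * z)) := by linarith
  have hδ : (0:ℝ) < 1 / (4 * (1 + x / y + Kn / (y * z))) := by positivity
  have h1θ : 0 < 1 - θ := by
    have : 1 / (4 * (1 + x / y + Kn / (y * z))) ≤ 1 := by
      rw [div_le_one h4E]; linarith
    linarith
  constructor
  · rw [e5, e6]
    have h := one_div_le_one_div_of_le hδ (by linarith :
      1 / (4 * (1 + x / y + Kn / (y * z))) ≤ 1 - θ)
    rw [one_div_one_div] at h
    linarith
  · intro ε hε0 hε1 k hk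
    rw [e5, e6] at hk
    have hklog : Real.log (1 / ε) ≤ (k : ℝ) * (1 / (4 * (1 + x / y + Kn / (y * z)))) := by
      rw [mul_one_div, le_div_iff₀ h4E]
      calc Real.log (1/ε) * (4 * (1 + x / y + Kn / (y * z)))
          = 4 * (1 + x / y + Kn / (y * z)) * Real.log (1/ε) := by ring
        _ ≤ k := hk
    have hθexp : θ ≤ Real.exp (-(1 / (4 * (1 + x / y + Kn / (y * z))))) := by
      have h := Real.add_one_le_exp (-(1 / (4 * (1 + x / y + Kn / (y * z)))))
      linarith
    calc θ ^ k ≤ Real.exp (-(1 / (4 * (1 + x / y + Kn / (y * z))))) ^ k :=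
          pow_le_pow_left₀ hθ0 hθexp k
      _ = Real.exp ((k:ℝ) * -(1 / (4 * (1 + x / y + Kn / (y * z))))) := by
          rw [← Real.exp_nat_mul]
      _ ≤ ε := by
          rw [← Real.exp_log hε0]
          apply Real.exp_le_exp.mpr
          have hlog1 : Real.log (1/ε) = -Real.log ε := by
            rw [one_div, Real.log_inv]
          have hr : (k:ℝ) * -(1 / (4 * (1 + x / y + Kn / (y * z))))
              = -((k:ℝ) * (1 / (4 * (1 + x / y + Kn / (y * z))))) := by ring
          rw [hr]
          linarith
end
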